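/- Fix a real R and suppose the pair (T̆,V̆) attains the minimum defining E_c^{ML}(R,Q), and define Q'(x) = ∑_y T̆(y)V̆(x|y). Then E_c^{ML}(R,Q') ≤ E_c^{ML}(R,Q). More precisely, there exists ρ̂ ∈ [−1,0] such that E_c^{ML}(R,Q') = E₀(ρ̂,Q') − ρ̂·R and E_c^{ML}(R,Q) − E_c^{ML}(R,Q') ≥ (1+ρ̂)·D(Q'‖Q), where D(Q'‖Q) = ∑_x Q'(x) log(Q'(x)/Q(x)). -/

import Mathlib

open scoped BigOperators
open Filter Topology

/-- `f` is a probability mass function on a finite alphabet. -/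
def IsPMF {α : Type*} [Fintype α] (f : α → ℝ) : Prop :=
  (∀ a, 0 ≤ f a) ∧ ∑ a, f a = 1

/-- `P` is a discrete memoryless channel from `𝓧` to `𝓨`. -/
def IsChannel {𝓧 𝓨 : Type*} [Fintype 𝓧] [Fintype 𝓨] (P : 𝓧 → 𝓨 → ℝ) : Prop :=
  ∀ x, IsPMF (P x)

/-- `V` is a conditional pmf on `𝓧` given `𝓨`. -/
def IsCondPMF {𝓧 𝓨 : Type*} [Fintype 𝓧] [Fintype 𝓨] (V : 𝓨 → 𝓧 → ℝ) : Prop :=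
  ∀ y, IsPMF (V y)

/-- one term `s·log(s/t)` of a KL divergence, with the conventions
    `0·log(0/t) = 0` and `s·log(s/0) = +∞` for `s > 0`. -/
noncomputable def klTerm (s t : ℝ) : EReal :=
  if s = 0 then 0 else if t = 0 then ⊤ else ((s * Real.log (s / t) : ℝ) : EReal)

/-- `D(T∘V ‖ Q∘P)`. -/
noncomputable def DQP {𝓧 𝓨 : Type*} [Fintype 𝓧] [Fintype 𝓨]
    (T : 𝓨 → ℝ) (V : 𝓨 → 𝓧 → ℝ) (Q : 𝓧 → ℝ) (P : 𝓧 → 𝓨 → ℝ) : EReal :=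
  ∑ y, ∑ x, klTerm (T y * V y x) (Q x * P x y)

/-- `D(T∘V ‖ T×Q)`. -/
noncomputable def DTQ {𝓧 𝓨 : Type*} [Fintype 𝓧] [Fintype 𝓨]
    (T : 𝓨 → ℝ) (V : 𝓨 → 𝓧 → ℝ) (Q : 𝓧 → ℝ) : EReal :=
  ∑ y, ∑ x, klTerm (T y * V y x) (T y * Q x)

/-- Gallager's function `E₀(ρ,Q)` (for `ρ > −1`). -/
noncomputable def E0 {𝓧 𝓨 : Type*} [Fintype 𝓧] [Fintype 𝓨]
    (ρ : ℝ) (Q : 𝓧 → ℝ) (P : 𝓧 → 𝓨 → ℝ) : ℝ :=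
  - Real.log (∑ y, (∑ x, Q x * P x y ^ (1 / (1 + ρ))) ^ (1 + ρ))

/-- The joint distribution `T_ρ∘V_ρ` on `𝓧 × 𝓨` (for `ρ > −1`). -/
noncomputable def Jrho {𝓧 𝓨 : Type*} [Fintype 𝓧] [Fintype 𝓨]
    (ρ : ℝ) (Q : 𝓧 → ℝ) (P : 𝓧 → 𝓨 → ℝ) (x : 𝓧) (y : 𝓨) : ℝ :=
  Q x * P x y ^ (1 / (1 + ρ)) * (∑ a, Q a * P a y ^ (1 / (1 + ρ))) ^ ρ /
    ∑ y', (∑ a, Q a * P a y' ^ (1 / (1 + ρ))) ^ (1 + ρ)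

/-- `max_{x : Q(x) > 0} P(y|x)`. -/
noncomputable def maxP {𝓧 𝓨 : Type*} (Q : 𝓧 → ℝ) (P : 𝓧 → 𝓨 → ℝ) (y : 𝓨) : ℝ :=
  ⨆ x : {x // 0 < Q x}, P x.1 y

/-- `E₀(−1,Q) = −log ∑_y max_{x : Q(x)>0} P(y|x)`. -/
noncomputable def E0m1 {𝓧 𝓨 : Type*} [Fintype 𝓧] [Fintype 𝓨]
    (Q : 𝓧 → ℝ) (P : 𝓧 → 𝓨 → ℝ) : ℝ :=
  - Real.log (∑ y, maxP Q P y)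

/-- `E₀(ρ,Q)` extended to `ρ = −1`. -/
noncomputable def E0full {𝓧 𝓨 : Type*} [Fintype 𝓧] [Fintype 𝓨]
    (ρ : ℝ) (Q : 𝓧 → ℝ) (P : 𝓧 → 𝓨 → ℝ) : ℝ :=
  if ρ = -1 then E0m1 Q P else E0 ρ Q P

/-- `T_{−1}(y) ∝ max_{a : Q(a)>0} P(y|a)`. -/
noncomputable def Tm1 {𝓧 𝓨 : Type*} [Fintype 𝓧] [Fintype 𝓨]
    (Q : 𝓧 → ℝ) (P : 𝓧 → 𝓨 → ℝ) (y : 𝓨) : ℝ :=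
  maxP Q P y / ∑ y', maxP Q P y'

/-- `V` is admissible at `ρ = −1`: `V(x|y) = 0` for every `x` outside
    `argmax_{a : Q(a)>0} P(y|a)`. -/
def AdmissibleAtM1 {𝓧 𝓨 : Type*} [Fintype 𝓧] [Fintype 𝓨]
    (Q : 𝓧 → ℝ) (P : 𝓧 → 𝓨 → ℝ) (V : 𝓨 → 𝓧 → ℝ) : Prop :=
  ∀ y x, ¬ (0 < Q x ∧ ∀ a, 0 < Q a → P a y ≤ P x y) → V y x = 0

/-- the error exponent `E_e(R,Q)`. -/
noncomputable def Ee {𝓧 𝓨 : Type*} [Fintype 𝓧] [Fintype 𝓨]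
    (R : ℝ) (Q : 𝓧 → ℝ) (P : 𝓧 → 𝓨 → ℝ) : EReal :=
  sInf {v | ∃ T : 𝓨 → ℝ, ∃ V : 𝓨 → 𝓧 → ℝ, IsPMF T ∧ IsCondPMF V ∧
    v = DQP T V Q P + max (DTQ T V Q - (R : EReal)) 0}

/-- the ML correct-decoding exponent `E_c^{ML}(R,Q)`. -/
noncomputable def EcML {𝓧 𝓨 : Type*} [Fintype 𝓧] [Fintype 𝓨]
    (R : ℝ) (Q : 𝓧 → ℝ) (P : 𝓧 → 𝓨 → ℝ) : EReal :=
  sInf {v | ∃ T : 𝓨 → ℝ, ∃ V : 𝓨 → 𝓧 → ℝ, IsPMF T ∧ IsCondPMF V ∧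
    v = DQP T V Q P + max ((R : EReal) - DTQ T V Q) 0}

/-- the strict correct-decoding exponent `E_c(R,Q)` (`+∞` if infeasible). -/
noncomputable def Ec {𝓧 𝓨 : Type*} [Fintype 𝓧] [Fintype 𝓨]
    (R : ℝ) (Q : 𝓧 → ℝ) (P : 𝓧 → 𝓨 → ℝ) : EReal :=
  sInf {v | ∃ T : 𝓨 → ℝ, ∃ V : 𝓨 → 𝓧 → ℝ, IsPMF T ∧ IsCondPMF V ∧
    (R : EReal) ≤ DTQ T V Q ∧ v = DQP T V Q P}

/-- the mutual information `I(Q∘P)`. -/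
noncomputable def MI {𝓧 𝓨 : Type*} [Fintype 𝓧] [Fintype 𝓨]
    (Q : 𝓧 → ℝ) (P : 𝓧 → 𝓨 → ℝ) : ℝ :=
  ∑ x, ∑ y, if Q x * P x y = 0 then 0
    else Q x * P x y * Real.log (P x y / ∑ a, Q a * P a y)

/-- the capacity `C(Z)` of the channel restricted to input letters in `Z`. -/
noncomputable def capacity {𝓧 𝓨 : Type*} [Fintype 𝓧] [Fintype 𝓨]
    (P : 𝓧 → 𝓨 → ℝ) (Z : Set 𝓧) : ℝ :=
  sSup {c | ∃ Q' : 𝓧 → ℝ, IsPMF Q' ∧ (∀ x, 0 < Q' x → x ∈ Z) ∧ c = MI Q' P}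

/-- `R_{−1}^{−}(Q)`. -/
noncomputable def Rm1minus {𝓧 𝓨 : Type*} [Fintype 𝓧] [Fintype 𝓨]
    (Q : 𝓧 → ℝ) (P : 𝓧 → 𝓨 → ℝ) : EReal :=
  sInf {v | ∃ V : 𝓨 → 𝓧 → ℝ, IsCondPMF V ∧ AdmissibleAtM1 Q P V ∧
    v = DTQ (Tm1 Q P) V Q}

/-- `R_{−1}^{+}(Q)`. -/
noncomputable def Rm1plus {𝓧 𝓨 : Type*} [Fintype 𝓧] [Fintype 𝓨]
    (Q : 𝓧 → ℝ) (P : 𝓧 → 𝓨 → ℝ) : EReal :=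
  sSup {v | ∃ V : 𝓨 → 𝓧 → ℝ, IsCondPMF V ∧ AdmissibleAtM1 Q P V ∧
    v = DTQ (Tm1 Q P) V Q}

/-- `F_ρ(T∘V, Q) = D(T∘V‖Q∘P) + ρ·D(T∘V‖T×Q)`. -/
noncomputable def Frho {𝓧 𝓨 : Type*} [Fintype 𝓧] [Fintype 𝓨]
    (ρ : ℝ) (T : 𝓨 → ℝ) (V : 𝓨 → 𝓧 → ℝ) (Q : 𝓧 → ℝ) (P : 𝓧 → 𝓨 → ℝ) : EReal :=
  DQP T V Q P + (ρ : EReal) * DTQ T V Q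

/-- the unconstrained penalized minimum
    `min_{T,V} { D(T∘V‖Q∘P) + ρ·(D(T∘V‖T×Q) − R) }`. -/
noncomputable def penMin {𝓧 𝓨 : Type*} [Fintype 𝓧] [Fintype 𝓨]
    (Q : 𝓧 → ℝ) (P : 𝓧 → 𝓨 → ℝ) (R ρ : ℝ) : EReal :=
  sInf {v | ∃ T : 𝓨 → ℝ, ∃ V : 𝓨 → 𝓧 → ℝ, IsPMF T ∧ IsCondPMF V ∧
    v = DQP T V Q P + (ρ : EReal) * (DTQ T V Q - (R : EReal))}

/-- the support-constrained penalized minimum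
    `min_{T,V : supp(V) ⊆ supp(Q)} { D(T∘V‖Q∘P) − ρ·(R − D(T∘V‖T×Q)) }`. -/
noncomputable def penMinS {𝓧 𝓨 : Type*} [Fintype 𝓧] [Fintype 𝓨]
    (Q : 𝓧 → ℝ) (P : 𝓧 → 𝓨 → ℝ) (R ρ : ℝ) : EReal :=
  sInf {v | ∃ T : 𝓨 → ℝ, ∃ V : 𝓨 → 𝓧 → ℝ, IsPMF T ∧ IsCondPMF V ∧
    (∀ y x, Q x = 0 → V y x = 0) ∧
    v = DQP T V Q P - (ρ : EReal) * ((R : EReal) - DTQ T V Q)}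

section AuxNTS
open Real Set

lemma erealCoeSum {α : Type*} (s : Finset α) (f : α → ℝ) :
    ((∑ i ∈ s, f i : ℝ) : EReal) = ∑ i ∈ s, ((f i : ℝ) : EReal) := by
  induction s using Finset.cons_induction with
  | empty => simp
  | cons a s ha ih => rw [Finset.sum_cons, Finset.sum_cons, EReal.coe_add, ih]

lemma erealCoeMax (a b : ℝ) : ((max a b : ℝ) : EReal) = max (a : EReal) (b : EReal) := by
  rcases le_total a b with h | h
  · rw [max_eq_right h, max_eq_right (EReal.coe_le_coe_iff.mpr h)]
  · rw [max_eq_left h, max_eq_left (EReal.coe_le_coe_iff.mpr h)]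

lemma erealSumNeBot {α : Type*} (s : Finset α) (f : α → EReal) (h : ∀ a ∈ s, f a ≠ ⊥) :
    ∑ a ∈ s, f a ≠ ⊥ := by
  induction s using Finset.cons_induction with
  | empty => simp
  | cons a s ha ih =>
      rw [Finset.sum_cons]
      intro hb
      rcases EReal.add_eq_bot_iff.mp hb with h' | h'
      · exact h a (Finset.mem_cons_self a s) h'
      · exact ih (fun b hb => h b (Finset.mem_cons_of_mem hb)) h'

lemma erealSumEqTop {α : Type*} [DecidableEq α] (s : Finset α) (f : α → EReal) (h : ∀ b ∈ s, f b ≠ ⊥)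
    {a : α} (ha : a ∈ s) (hfa : f a = ⊤) : ∑ b ∈ s, f b = ⊤ := by
  rw [← Finset.add_sum_erase s f ha, hfa]
  exact EReal.top_add_of_ne_bot (erealSumNeBot _ _ fun b hb => h b (Finset.mem_of_mem_erase hb))

lemma klTerm_ne_bot (s t : ℝ) : klTerm s t ≠ ⊥ := by
  unfold klTerm
  split_ifs
  · simp
  · simp
  · exact fun h => EReal.coe_ne_bot _ h

lemma klTerm_eq_coe {s t : ℝ} (h : s ≠ 0 → t ≠ 0) :
    klTerm s t = ((s * Real.log (s / t) : ℝ) : EReal) := by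
  unfold klTerm
  split_ifs with h1 h2
  · simp [h1]
  · exact absurd h2 (h h1)
  · rfl

lemma klTerm_eq_top {s t : ℝ} (h1 : s ≠ 0) (h2 : t = 0) : klTerm s t = ⊤ := by
  unfold klTerm; rw [if_neg h1, if_pos h2]

/-- Gibbs' inequality. -/
lemma gibbs {α : Type*} [Fintype α] {p μ : α → ℝ} (hp : ∀ a, 0 ≤ p a) (hp1 : ∑ a, p a = 1)
    (hμ : ∀ a, 0 ≤ μ a) (h : ∀ a, p a ≠ 0 → 0 < μ a) :
    -Real.log (∑ a, μ a) ≤ ∑ a, p a * Real.log (p a / μ a) := by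
  obtain ⟨a₀, ha₀⟩ : ∃ a, p a ≠ 0 := by
    by_contra hc
    push_neg at hc
    rw [Finset.sum_eq_zero (fun a _ => hc a)] at hp1
    norm_num at hp1
  have hS : 0 < ∑ a, μ a :=
    lt_of_lt_of_le (h a₀ ha₀) (Finset.single_le_sum (fun a _ => hμ a) (Finset.mem_univ a₀))
  set S := ∑ a, μ a with hSdef
  have key : ∑ a, p a * Real.log (μ a / (p a * S)) ≤ 0 := by
    have hb : ∀ a ∈ Finset.univ, p a * Real.log (μ a / (p a * S)) ≤ μ a / S - p a := by
      intro a _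
      by_cases hpa : p a = 0
      · rw [hpa]
        simp only [zero_mul, sub_zero]
        exact div_nonneg (hμ a) hS.le
      · have hpa' : 0 < p a := (hp a).lt_of_ne (Ne.symm hpa)
        have hμa := h a hpa
        have hlog : Real.log (μ a / (p a * S)) ≤ μ a / (p a * S) - 1 :=
          Real.log_le_sub_one_of_pos (by positivity)
        have := mul_le_mul_of_nonneg_left hlog (le_of_lt hpa')
        calc p a * Real.log (μ a / (p a * S)) ≤ p a * (μ a / (p a * S) - 1) := this
          _ = μ a / S - p a := by field_simp
    calc ∑ a, p a * Real.log (μ a / (p a * S)) ≤ ∑ a, (μ a / S - p a) := Finset.sum_le_sum hb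
      _ = 0 := by rw [Finset.sum_sub_distrib, ← Finset.sum_div, hp1, ← hSdef, div_self hS.ne']; ring
  have expand : ∀ a ∈ Finset.univ,
      p a * Real.log (p a / μ a) = -(p a * Real.log (μ a / (p a * S))) - p a * Real.log S := by
    intro a _
    by_cases hpa : p a = 0
    · simp [hpa]
    have hpa' : 0 < p a := (hp a).lt_of_ne (Ne.symm hpa)
    have hμa := h a hpa
    rw [Real.log_div hμa.ne' (by positivity), Real.log_div hpa hμa.ne',
      Real.log_mul hpa'.ne' hS.ne']
    ring
  rw [Finset.sum_congr rfl expand]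
  have : ∑ a, (-(p a * Real.log (μ a / (p a * S))) - p a * Real.log S)
      = -(∑ a, p a * Real.log (μ a / (p a * S))) - Real.log S := by
    rw [Finset.sum_sub_distrib, ← Finset.sum_neg_distrib, ← Finset.sum_mul, hp1, one_mul]
  rw [this]
  linarith

end AuxNTS
section AuxNTS2
open Real Set
variable {𝓧 𝓨 : Type*} [Fintype 𝓧] [Fintype 𝓨]

/-- real-valued `D(T∘V‖Q∘P)` -/
noncomputable def rDQP (T : 𝓨 → ℝ) (V : 𝓨 → 𝓧 → ℝ) (Q : 𝓧 → ℝ) (P : 𝓧 → 𝓨 → ℝ) : ℝ :=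
  ∑ y, ∑ x, T y * V y x * Real.log (T y * V y x / (Q x * P x y))

/-- real-valued `D(T∘V‖T×Q)` -/
noncomputable def rDTQ (T : 𝓨 → ℝ) (V : 𝓨 → 𝓧 → ℝ) (Q : 𝓧 → ℝ) : ℝ :=
  ∑ y, ∑ x, T y * V y x * Real.log (T y * V y x / (T y * Q x))

lemma DQP_eq_coe {T : 𝓨 → ℝ} {V : 𝓨 → 𝓧 → ℝ} {Q : 𝓧 → ℝ} {P : 𝓧 → 𝓨 → ℝ}
    (h : ∀ y x, T y * V y x ≠ 0 → Q x * P x y ≠ 0) :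
    DQP T V Q P = ((rDQP T V Q P : ℝ) : EReal) := by
  unfold DQP rDQP
  rw [erealCoeSum]
  refine Finset.sum_congr rfl fun y _ => ?_
  rw [erealCoeSum]
  exact Finset.sum_congr rfl fun x _ => klTerm_eq_coe (h y x)

lemma DTQ_eq_coe {T : 𝓨 → ℝ} {V : 𝓨 → 𝓧 → ℝ} {Q : 𝓧 → ℝ}
    (h : ∀ y x, T y * V y x ≠ 0 → T y * Q x ≠ 0) :
    DTQ T V Q = ((rDTQ T V Q : ℝ) : EReal) := by
  unfold DTQ rDTQ
  rw [erealCoeSum]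
  refine Finset.sum_congr rfl fun y _ => ?_
  rw [erealCoeSum]
  exact Finset.sum_congr rfl fun x _ => klTerm_eq_coe (h y x)

lemma DQP_eq_top {T : 𝓨 → ℝ} {V : 𝓨 → 𝓧 → ℝ} {Q : 𝓧 → ℝ} {P : 𝓧 → 𝓨 → ℝ}
    (y : 𝓨) (x : 𝓧) (h1 : T y * V y x ≠ 0) (h2 : Q x * P x y = 0) :
    DQP T V Q P = ⊤ := by
  classical
  unfold DQP
  refine erealSumEqTop _ _ (fun b _ => erealSumNeBot _ _ fun a _ => klTerm_ne_bot _ _)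
    (Finset.mem_univ y) ?_
  exact erealSumEqTop _ _ (fun a _ => klTerm_ne_bot _ _) (Finset.mem_univ x)
    (klTerm_eq_top h1 h2)

lemma pmf_exists_pos {α : Type*} [Fintype α] {q : α → ℝ} (hq : IsPMF q) : ∃ a, 0 < q a := by
  by_contra hc
  push_neg at hc
  have : ∑ a, q a = 0 :=
    Finset.sum_eq_zero fun a _ => le_antisymm (hc a) (hq.1 a)
  rw [hq.2] at this
  norm_num at this

lemma pmf_le_one {α : Type*} [Fintype α] {q : α → ℝ} (hq : IsPMF q) (a : α) : q a ≤ 1 := by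
  rw [← hq.2]
  exact Finset.single_le_sum (fun b _ => hq.1 b) (Finset.mem_univ a)

lemma maxP_spec {Q : 𝓧 → ℝ} {P : 𝓧 → 𝓨 → ℝ} (hQ : IsPMF Q) (y : 𝓨) :
    (∀ x, 0 < Q x → P x y ≤ maxP Q P y) ∧ ∃ x, 0 < Q x ∧ maxP Q P y = P x y := by
  obtain ⟨a, ha⟩ := pmf_exists_pos hQ
  haveI : Nonempty {x // 0 < Q x} := ⟨⟨a, ha⟩⟩
  obtain ⟨x₀, hx₀⟩ := Finite.exists_max (fun x : {x // 0 < Q x} => P x.1 y)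
  have hbdd : BddAbove (Set.range fun x : {x // 0 < Q x} => P x.1 y) :=
    Set.Finite.bddAbove (Set.finite_range _)
  have hle : maxP Q P y = P x₀.1 y := by
    refine le_antisymm (ciSup_le fun i => hx₀ i) (le_ciSup hbdd x₀)
  refine ⟨fun x hx => ?_, ⟨x₀.1, x₀.2, hle⟩⟩
  exact le_ciSup hbdd ⟨x, hx⟩

/-- `∑ klTerm(p‖q) ≥ 0` in `EReal` for pmfs. -/
lemma sum_klTerm_nonneg {α : Type*} [Fintype α] {p q : α → ℝ} (hp : IsPMF p) (hq : IsPMF q) :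
    (0 : EReal) ≤ ∑ a, klTerm (p a) (q a) := by
  classical
  by_cases hfin : ∀ a, p a ≠ 0 → q a ≠ 0
  · have : (∑ a, klTerm (p a) (q a)) = ((∑ a, p a * Real.log (p a / q a) : ℝ) : EReal) := by
      rw [erealCoeSum]
      exact Finset.sum_congr rfl fun a _ => klTerm_eq_coe (hfin a)
    rw [this]
    have := gibbs hp.1 hp.2 hq.1 (fun a ha => (hq.1 a).lt_of_ne (Ne.symm (hfin a ha)))
    rw [hq.2] at this
    simp only [Real.log_one, neg_zero] at this
    exact_mod_cast this
  · push_neg at hfin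
    obtain ⟨a, ha1, ha2⟩ := hfin
    rw [erealSumEqTop _ _ (fun b _ => klTerm_ne_bot _ _) (Finset.mem_univ a)
      (klTerm_eq_top ha1 (not_not.mp fun h => h ha2))]
    exact le_top

end AuxNTS2
section AuxNTS3
set_option linter.unusedSectionVars false
open Real Set
variable {𝓧 𝓨 : Type*} [Fintype 𝓧] [Fintype 𝓨]

/-- Gallager's variational lower bound, `ρ > -1`. -/
lemma gallager_lb {q : 𝓧 → ℝ} {P : 𝓧 → 𝓨 → ℝ} {T : 𝓨 → ℝ} {V : 𝓨 → 𝓧 → ℝ} {ρ : ℝ}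
    (hρ1 : -1 < ρ) (hq : IsPMF q) (hP : IsChannel P) (hT : IsPMF T) (hV : IsCondPMF V)
    (hfin : ∀ y x, T y * V y x ≠ 0 → q x * P x y ≠ 0) :
    E0 ρ q P ≤ rDQP T V q P + ρ * rDTQ T V q := by
  have h1ρ : 0 < 1 + ρ := by linarith
  set s : ℝ := 1 / (1 + ρ) with hsdef
  have hs : s * (1 + ρ) = 1 := by rw [hsdef]; field_simp
  have hspos : 0 < s := by rw [hsdef]; positivity
  set A : 𝓨 → ℝ := fun y => ∑ x, q x * P x y ^ s with hAdef
  set μ : 𝓨 → ℝ := fun y => A y ^ (1 + ρ) with hμdef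
  have hAnn : ∀ y, 0 ≤ A y := fun y =>
    Finset.sum_nonneg fun x _ => mul_nonneg (hq.1 x) (Real.rpow_nonneg ((hP x).1 y) _)
  have hApos : ∀ y, T y ≠ 0 → 0 < A y := by
    intro y hTy
    obtain ⟨x, hx⟩ := pmf_exists_pos (hV y)
    have hqP := hfin y x (mul_ne_zero hTy hx.ne')
    have hqx : 0 < q x := (hq.1 x).lt_of_ne fun h => hqP (by rw [← h]; ring)
    have hPxy : 0 < P x y := ((hP x).1 y).lt_of_ne fun h => hqP (by rw [← h]; ring)
    calc (0:ℝ) < q x * P x y ^ s := by positivity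
      _ ≤ A y := Finset.single_le_sum
          (fun x' _ => mul_nonneg (hq.1 x') (Real.rpow_nonneg ((hP x').1 y) _))
          (Finset.mem_univ x)
  -- Step A: pointwise identity
  have stepA : ∀ y x,
      T y * V y x * Real.log (T y * V y x / (q x * P x y)) +
        ρ * (T y * V y x * Real.log (T y * V y x / (T y * q x)))
      = T y * V y x * Real.log (T y) +
        (1 + ρ) * (T y * V y x * Real.log (V y x / (q x * P x y ^ s))) := by
    intro y x
    by_cases hW : T y * V y x = 0
    · rw [hW]; ring
    · have hTy : T y ≠ 0 := fun h => hW (by rw [h]; ring)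
      have hVx : V y x ≠ 0 := fun h => hW (by rw [h]; ring)
      have hqP := hfin y x hW
      have hqx : 0 < q x := (hq.1 x).lt_of_ne fun h => hqP (by rw [← h]; ring)
      have hPxy : 0 < P x y := ((hP x).1 y).lt_of_ne fun h => hqP (by rw [← h]; ring)
      rw [Real.log_div hW hqP, Real.log_mul hTy hVx, Real.log_mul hqx.ne' hPxy.ne',
        mul_div_mul_left _ _ hTy, Real.log_div hVx hqx.ne',
        Real.log_div hVx (by positivity), Real.log_mul hqx.ne' (by positivity),
        Real.log_rpow hPxy]
      linear_combination (T y * V y x * Real.log (P x y)) * hs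
  -- Step B: rewrite the objective
  have stepB : rDQP T V q P + ρ * rDTQ T V q
      = ∑ y, (T y * Real.log (T y) +
          (1 + ρ) * ∑ x, T y * V y x * Real.log (V y x / (q x * P x y ^ s))) := by
    unfold rDQP rDTQ
    rw [Finset.mul_sum, ← Finset.sum_add_distrib]
    refine Finset.sum_congr rfl fun y _ => ?_
    rw [Finset.mul_sum, ← Finset.sum_add_distrib, Finset.sum_congr rfl fun x _ => stepA y x,
      Finset.sum_add_distrib, ← Finset.mul_sum]
    congr 1
    calc ∑ x, T y * V y x * Real.log (T y) = (T y * Real.log (T y)) * ∑ x, V y x := by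
          rw [Finset.mul_sum]; exact Finset.sum_congr rfl fun x _ => by ring
      _ = T y * Real.log (T y) := by rw [(hV y).2, mul_one]
  -- Step C: per-y lower bound
  have stepC : ∀ y, T y * Real.log (T y / μ y)
      ≤ T y * Real.log (T y) +
        (1 + ρ) * ∑ x, T y * V y x * Real.log (V y x / (q x * P x y ^ s)) := by
    intro y
    by_cases hTy : T y = 0
    · simp [hTy]
    · have hTyp : 0 < T y := (hT.1 y).lt_of_ne (Ne.symm hTy)
      have hA := hApos y hTy
      have hμy : 0 < μ y := Real.rpow_pos_of_pos hA _
      have hinner : ∑ x, T y * V y x * Real.log (V y x / (q x * P x y ^ s))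
          = T y * ∑ x, V y x * Real.log (V y x / (q x * P x y ^ s)) := by
        rw [Finset.mul_sum]; exact Finset.sum_congr rfl fun x _ => by ring
      have hgb : -Real.log (A y) ≤ ∑ x, V y x * Real.log (V y x / (q x * P x y ^ s)) := by
        refine gibbs (hV y).1 (hV y).2
          (fun x => mul_nonneg (hq.1 x) (Real.rpow_nonneg ((hP x).1 y) _)) ?_
        intro x hx
        have hqP := hfin y x (mul_ne_zero hTy hx)
        have hqx : 0 < q x := (hq.1 x).lt_of_ne fun h => hqP (by rw [← h]; ring)
        have hPxy : 0 < P x y := ((hP x).1 y).lt_of_ne fun h => hqP (by rw [← h]; ring)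
        positivity
      have hlog : Real.log (T y / μ y) = Real.log (T y) - (1 + ρ) * Real.log (A y) := by
        rw [Real.log_div hTy hμy.ne', hμdef]
        exact congrArg (fun z => Real.log (T y) - z) (Real.log_rpow hA _) |>.trans (by ring)
      rw [hlog, hinner]
      have := mul_le_mul_of_nonneg_left hgb (le_of_lt hTyp)
      nlinarith [this, h1ρ.le]
  -- Step D: outer Gibbs
  have stepD : -Real.log (∑ y, μ y) ≤ ∑ y, T y * Real.log (T y / μ y) := by
    refine gibbs hT.1 hT.2 (fun y => Real.rpow_nonneg (hAnn y) _) ?_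
    intro y hTy
    exact Real.rpow_pos_of_pos (hApos y hTy) _
  have hE0 : E0 ρ q P = -Real.log (∑ y, μ y) := by
    unfold E0
    rfl
  rw [hE0, stepB]
  exact le_trans stepD (Finset.sum_le_sum fun y _ => stepC y)

/-- Gallager's variational lower bound at `ρ = -1`. -/
lemma gallager_lb_m1 {q : 𝓧 → ℝ} {P : 𝓧 → 𝓨 → ℝ} {T : 𝓨 → ℝ} {V : 𝓨 → 𝓧 → ℝ}
    (hq : IsPMF q) (hP : IsChannel P) (hT : IsPMF T) (hV : IsCondPMF V)
    (hfin : ∀ y x, T y * V y x ≠ 0 → q x * P x y ≠ 0) :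
    E0m1 q P ≤ rDQP T V q P - rDTQ T V q := by
  set m : 𝓨 → ℝ := fun y => maxP q P y with hmdef
  have hmnn : ∀ y, 0 ≤ m y := by
    intro y
    obtain ⟨x, hx, hEq⟩ := (maxP_spec hq y).2
    rw [hmdef]; simp only []; rw [hEq]; exact (hP x).1 y
  have hmpos : ∀ y, T y ≠ 0 → 0 < m y := by
    intro y hTy
    obtain ⟨x, hx⟩ := pmf_exists_pos (hV y)
    have hqP := hfin y x (mul_ne_zero hTy hx.ne')
    have hqx : 0 < q x := (hq.1 x).lt_of_ne fun h => hqP (by rw [← h]; ring)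
    have hPxy : 0 < P x y := ((hP x).1 y).lt_of_ne fun h => hqP (by rw [← h]; ring)
    exact lt_of_lt_of_le hPxy ((maxP_spec hq y).1 x hqx)
  -- pointwise
  have stepA : ∀ y x,
      T y * V y x * Real.log (T y * V y x / (q x * P x y)) -
        T y * V y x * Real.log (T y * V y x / (T y * q x))
      = T y * V y x * Real.log (T y) - T y * V y x * Real.log (P x y) := by
    intro y x
    by_cases hW : T y * V y x = 0
    · rw [hW]; ring
    · have hTy : T y ≠ 0 := fun h => hW (by rw [h]; ring)
      have hVx : V y x ≠ 0 := fun h => hW (by rw [h]; ring)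
      have hqP := hfin y x hW
      have hqx : 0 < q x := (hq.1 x).lt_of_ne fun h => hqP (by rw [← h]; ring)
      have hPxy : 0 < P x y := ((hP x).1 y).lt_of_ne fun h => hqP (by rw [← h]; ring)
      rw [Real.log_div hW hqP, Real.log_mul hTy hVx, Real.log_mul hqx.ne' hPxy.ne',
        mul_div_mul_left _ _ hTy, Real.log_div hVx hqx.ne']
      ring
  have stepA2 : ∀ y x, T y * V y x * Real.log (P x y) ≤ T y * V y x * Real.log (m y) := by
    intro y x
    by_cases hW : T y * V y x = 0
    · rw [hW]; ring_nf; exact le_refl _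
    · have hTy : T y ≠ 0 := fun h => hW (by rw [h]; ring)
      have hVx : V y x ≠ 0 := fun h => hW (by rw [h]; ring)
      have hqP := hfin y x hW
      have hqx : 0 < q x := (hq.1 x).lt_of_ne fun h => hqP (by rw [← h]; ring)
      have hPxy : 0 < P x y := ((hP x).1 y).lt_of_ne fun h => hqP (by rw [← h]; ring)
      have hWpos : 0 < T y * V y x :=
        mul_nonneg (hT.1 y) ((hV y).1 x) |>.lt_of_ne (Ne.symm hW)
      exact mul_le_mul_of_nonneg_left
        (Real.log_le_log hPxy ((maxP_spec hq y).1 x hqx)) hWpos.le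
  have stepB : rDQP T V q P - rDTQ T V q
      = ∑ y, (T y * Real.log (T y) - ∑ x, T y * V y x * Real.log (P x y)) := by
    unfold rDQP rDTQ
    rw [← Finset.sum_sub_distrib]
    refine Finset.sum_congr rfl fun y _ => ?_
    rw [← Finset.sum_sub_distrib, Finset.sum_congr rfl fun x _ => stepA y x,
      Finset.sum_sub_distrib]
    congr 1
    calc ∑ x, T y * V y x * Real.log (T y) = (T y * Real.log (T y)) * ∑ x, V y x := by
          rw [Finset.mul_sum]; exact Finset.sum_congr rfl fun x _ => by ring
      _ = T y * Real.log (T y) := by rw [(hV y).2, mul_one]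
  have stepC : ∀ y, T y * Real.log (T y / m y)
      ≤ T y * Real.log (T y) - ∑ x, T y * V y x * Real.log (P x y) := by
    intro y
    by_cases hTy : T y = 0
    · simp [hTy]
    · have hTyp : 0 < T y := (hT.1 y).lt_of_ne (Ne.symm hTy)
      have hmy := hmpos y hTy
      have h1 : ∑ x, T y * V y x * Real.log (P x y) ≤ T y * Real.log (m y) := by
        calc ∑ x, T y * V y x * Real.log (P x y) ≤ ∑ x, T y * V y x * Real.log (m y) :=
              Finset.sum_le_sum fun x _ => stepA2 y x
          _ = (T y * Real.log (m y)) * ∑ x, V y x := by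
              rw [Finset.mul_sum]; exact Finset.sum_congr rfl fun x _ => by ring
          _ = T y * Real.log (m y) := by rw [(hV y).2, mul_one]
      rw [Real.log_div hTy hmy.ne']
      linarith [h1]
  have stepD : -Real.log (∑ y, m y) ≤ ∑ y, T y * Real.log (T y / m y) :=
    gibbs hT.1 hT.2 hmnn hmpos
  have hE0 : E0m1 q P = -Real.log (∑ y, m y) := rfl
  rw [hE0, stepB]
  exact le_trans stepD (Finset.sum_le_sum fun y _ => stepC y)

end AuxNTS3
section AuxNTS4
set_option linter.unusedSectionVars false
open Real Set
variable {𝓧 𝓨 : Type*} [Fintype 𝓧] [Fintype 𝓨]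

lemma marg_pos {T : 𝓨 → ℝ} {V : 𝓨 → 𝓧 → ℝ} (hT : IsPMF T) (hV : IsCondPMF V)
    {y : 𝓨} {x : 𝓧} (hW : T y * V y x ≠ 0) : 0 < ∑ y', T y' * V y' x := by
  have hWpos : 0 < T y * V y x := (mul_nonneg (hT.1 y) ((hV y).1 x)).lt_of_ne (Ne.symm hW)
  exact lt_of_lt_of_le hWpos (Finset.single_le_sum
    (fun y' _ => mul_nonneg (hT.1 y') ((hV y').1 x)) (Finset.mem_univ y))

/-- chain rule decomposition for `D(T∘V‖Q∘P)` -/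
lemma rDQP_decomp {T : 𝓨 → ℝ} {V : 𝓨 → 𝓧 → ℝ} {Q Q' : 𝓧 → ℝ} {P : 𝓧 → 𝓨 → ℝ}
    (hT : IsPMF T) (hV : IsCondPMF V) (hQ : IsPMF Q) (hP : IsChannel P)
    (hfin : ∀ y x, T y * V y x ≠ 0 → Q x * P x y ≠ 0)
    (hQ' : ∀ x, Q' x = ∑ y, T y * V y x) :
    rDQP T V Q P = rDQP T V Q' P + ∑ x, Q' x * Real.log (Q' x / Q x) := by
  have hd : ∑ x, Q' x * Real.log (Q' x / Q x)
      = ∑ y, ∑ x, T y * V y x * Real.log (Q' x / Q x) := by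
    rw [Finset.sum_comm]
    refine Finset.sum_congr rfl fun x _ => ?_
    rw [hQ', Finset.sum_mul]
  rw [hd]
  unfold rDQP
  rw [← Finset.sum_add_distrib]
  refine Finset.sum_congr rfl fun y _ => ?_
  rw [← Finset.sum_add_distrib]
  refine Finset.sum_congr rfl fun x _ => ?_
  by_cases hW : T y * V y x = 0
  · rw [hW]; ring
  · have hQP := hfin y x hW
    have hQx : 0 < Q x := (hQ.1 x).lt_of_ne fun h => hQP (by rw [← h]; ring)
    have hPxy : 0 < P x y := ((hP x).1 y).lt_of_ne fun h => hQP (by rw [← h]; ring)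
    have hQ'x : 0 < Q' x := by rw [hQ']; exact marg_pos hT hV hW
    rw [Real.log_div hW hQP, Real.log_div hW (by positivity),
      Real.log_div hQ'x.ne' hQx.ne', Real.log_mul hQx.ne' hPxy.ne',
      Real.log_mul hQ'x.ne' hPxy.ne']
    ring

/-- chain rule decomposition for `D(T∘V‖T×Q)` -/
lemma rDTQ_decomp {T : 𝓨 → ℝ} {V : 𝓨 → 𝓧 → ℝ} {Q Q' : 𝓧 → ℝ} {P : 𝓧 → 𝓨 → ℝ}
    (hT : IsPMF T) (hV : IsCondPMF V) (hQ : IsPMF Q) (hP : IsChannel P)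
    (hfin : ∀ y x, T y * V y x ≠ 0 → Q x * P x y ≠ 0)
    (hQ' : ∀ x, Q' x = ∑ y, T y * V y x) :
    rDTQ T V Q = rDTQ T V Q' + ∑ x, Q' x * Real.log (Q' x / Q x) := by
  have hd : ∑ x, Q' x * Real.log (Q' x / Q x)
      = ∑ y, ∑ x, T y * V y x * Real.log (Q' x / Q x) := by
    rw [Finset.sum_comm]
    refine Finset.sum_congr rfl fun x _ => ?_
    rw [hQ', Finset.sum_mul]
  rw [hd]
  unfold rDTQ
  rw [← Finset.sum_add_distrib]
  refine Finset.sum_congr rfl fun y _ => ?_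
  rw [← Finset.sum_add_distrib]
  refine Finset.sum_congr rfl fun x _ => ?_
  by_cases hW : T y * V y x = 0
  · rw [hW]; ring
  · have hQP := hfin y x hW
    have hTy : T y ≠ 0 := fun h => hW (by rw [h]; ring)
    have hTyp : 0 < T y := (hT.1 y).lt_of_ne (Ne.symm hTy)
    have hQx : 0 < Q x := (hQ.1 x).lt_of_ne fun h => hQP (by rw [← h]; ring)
    have hQ'x : 0 < Q' x := by rw [hQ']; exact marg_pos hT hV hW
    rw [Real.log_div hW (by positivity), Real.log_div hW (by positivity),
      Real.log_div hQ'x.ne' hQx.ne', Real.log_mul hTyp.ne' hQx.ne',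
      Real.log_mul hTyp.ne' hQ'x.ne']
    ring

end AuxNTS4
section AuxNTS5
set_option linter.unusedSectionVars false
open Real Set
variable {𝓧 𝓨 : Type*} [Fintype 𝓧] [Fintype 𝓨]

noncomputable def Af (q : 𝓧 → ℝ) (P : 𝓧 → 𝓨 → ℝ) (ρ : ℝ) (y : 𝓨) : ℝ :=
  ∑ x, q x * P x y ^ (1 / (1 + ρ))

noncomputable def Sf (q : 𝓧 → ℝ) (P : 𝓧 → 𝓨 → ℝ) (ρ : ℝ) : ℝ :=
  ∑ y, Af q P ρ y ^ (1 + ρ)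

noncomputable def Tf (q : 𝓧 → ℝ) (P : 𝓧 → 𝓨 → ℝ) (ρ : ℝ) (y : 𝓨) : ℝ :=
  Af q P ρ y ^ (1 + ρ) / Sf q P ρ

noncomputable def Vf (q : 𝓧 → ℝ) (P : 𝓧 → 𝓨 → ℝ) (ρ : ℝ) (y : 𝓨) (x : 𝓧) : ℝ :=
  if Af q P ρ y = 0 then (Fintype.card 𝓧 : ℝ)⁻¹
  else q x * P x y ^ (1 / (1 + ρ)) / Af q P ρ y

noncomputable def dtqF (q : 𝓧 → ℝ) (P : 𝓧 → 𝓨 → ℝ) (ρ : ℝ) : ℝ :=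
  rDTQ (Tf q P ρ) (Vf q P ρ) q

lemma E0_eq_Sf (q : 𝓧 → ℝ) (P : 𝓧 → 𝓨 → ℝ) (ρ : ℝ) : E0 ρ q P = -Real.log (Sf q P ρ) := rfl

variable {q : 𝓧 → ℝ} {P : 𝓧 → 𝓨 → ℝ} {ρ : ℝ}

lemma Af_nonneg (hq : IsPMF q) (hP : IsChannel P) (y : 𝓨) : 0 ≤ Af q P ρ y :=
  Finset.sum_nonneg fun x _ => mul_nonneg (hq.1 x) (Real.rpow_nonneg ((hP x).1 y) _)

lemma Af_eq_zero_iff (hρ1 : -1 < ρ) (hq : IsPMF q) (hP : IsChannel P) (y : 𝓨) :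
    Af q P ρ y = 0 ↔ ∀ x, q x * P x y = 0 := by
  have h1ρ : 0 < 1 + ρ := by linarith
  have hs : (1 : ℝ) / (1 + ρ) ≠ 0 := by positivity
  constructor
  · intro h x
    have := (Finset.sum_eq_zero_iff_of_nonneg
      (fun x' _ => mul_nonneg (hq.1 x') (Real.rpow_nonneg ((hP x').1 y) _))).mp h x
      (Finset.mem_univ x)
    rcases mul_eq_zero.mp this with h' | h'
    · rw [h']; ring
    · have : P x y = 0 :=
        ((Real.rpow_eq_zero ((hP x).1 y) hs).mp h')
      rw [this]; ring
  · intro h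
    refine Finset.sum_eq_zero fun x _ => ?_
    rcases mul_eq_zero.mp (h x) with h' | h'
    · rw [h']; ring
    · rw [h', Real.zero_rpow hs]; ring

lemma Af_pos (hρ1 : -1 < ρ) (hq : IsPMF q) (hP : IsChannel P) {y : 𝓨} {x : 𝓧}
    (h : q x * P x y ≠ 0) : 0 < Af q P ρ y := by
  refine (Af_nonneg hq hP y).lt_of_ne (Ne.symm ?_)
  rw [Ne, Af_eq_zero_iff hρ1 hq hP]
  push_neg
  exact ⟨x, h⟩

lemma Sf_pos (hρ1 : -1 < ρ) (hq : IsPMF q) (hP : IsChannel P) : 0 < Sf q P ρ := by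
  have h1ρ : 0 < 1 + ρ := by linarith
  obtain ⟨x₀, hx₀⟩ := pmf_exists_pos hq
  obtain ⟨y₀, hy₀⟩ : ∃ y, P x₀ y ≠ 0 := by
    by_contra hc
    push_neg at hc
    have : ∑ y, P x₀ y = 0 := Finset.sum_eq_zero fun y _ => hc y
    rw [(hP x₀).2] at this
    norm_num at this
  have hA : 0 < Af q P ρ y₀ := Af_pos hρ1 hq hP (mul_ne_zero hx₀.ne' hy₀)
  refine Finset.sum_pos' (fun y _ => Real.rpow_nonneg (Af_nonneg hq hP y) _)
    ⟨y₀, Finset.mem_univ y₀, Real.rpow_pos_of_pos hA _⟩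

lemma Tf_pmf (hρ1 : -1 < ρ) (hq : IsPMF q) (hP : IsChannel P) : IsPMF (Tf q P ρ) := by
  constructor
  · intro y
    exact div_nonneg (Real.rpow_nonneg (Af_nonneg hq hP y) _) (Sf_pos hρ1 hq hP).le
  · unfold Tf
    rw [← Finset.sum_div]
    exact div_self (Sf_pos hρ1 hq hP).ne'

lemma Vf_cpmf [Nonempty 𝓧] (hρ1 : -1 < ρ) (hq : IsPMF q) (hP : IsChannel P) :
    IsCondPMF (Vf q P ρ) := by
  intro y
  by_cases hA : Af q P ρ y = 0
  · constructor
    · intro x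
      rw [Vf, if_pos hA]
      positivity
    · have hcard : (0:ℝ) < (Fintype.card 𝓧 : ℝ) := by
        have := Fintype.card_pos (α := 𝓧)
        exact_mod_cast this
      simp only [Vf, if_pos hA, Finset.sum_const, Finset.card_univ, nsmul_eq_mul]
      field_simp
  · have hApos : 0 < Af q P ρ y := (Af_nonneg hq hP y).lt_of_ne (Ne.symm hA)
    constructor
    · intro x
      rw [Vf, if_neg hA]
      exact div_nonneg (mul_nonneg (hq.1 x) (Real.rpow_nonneg ((hP x).1 y) _)) hApos.le
    · simp only [Vf, if_neg hA]
      rw [← Finset.sum_div]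
      exact div_self hA

lemma Tf_ne_zero_imp (hρ1 : -1 < ρ) (hq : IsPMF q) (hP : IsChannel P) {y : 𝓨}
    (h : Tf q P ρ y ≠ 0) : Af q P ρ y ≠ 0 := by
  intro hA
  have h1ρ : 0 < 1 + ρ := by linarith
  apply h
  rw [Tf, hA, Real.zero_rpow h1ρ.ne', zero_div]

lemma fam_fin [Nonempty 𝓧] (hρ1 : -1 < ρ) (hq : IsPMF q) (hP : IsChannel P) :
    ∀ y x, Tf q P ρ y * Vf q P ρ y x ≠ 0 → q x * P x y ≠ 0 := by
  intro y x hW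
  have hTy : Tf q P ρ y ≠ 0 := fun h => hW (by rw [h]; ring)
  have hVx : Vf q P ρ y x ≠ 0 := fun h => hW (by rw [h]; ring)
  have hA := Tf_ne_zero_imp hρ1 hq hP hTy
  rw [Vf, if_neg hA] at hVx
  have hnum : q x * P x y ^ (1 / (1 + ρ)) ≠ 0 := fun h => hVx (by rw [h]; ring)
  have hqx : q x ≠ 0 := fun h => hnum (by rw [h]; ring)
  have hP' : P x y ^ (1 / (1 + ρ)) ≠ 0 := fun h => hnum (by rw [h]; ring)
  have hPxy : P x y ≠ 0 := by
    intro h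
    apply hP'
    have h1ρ : 0 < 1 + ρ := by linarith
    rw [h, Real.zero_rpow (by positivity)]
  exact mul_ne_zero hqx hPxy

/-- `F_ρ` evaluated at the Gallager family equals `E0`. -/
lemma fam_identity [Nonempty 𝓧] (hρ1 : -1 < ρ) (hq : IsPMF q) (hP : IsChannel P) :
    rDQP (Tf q P ρ) (Vf q P ρ) q P + ρ * rDTQ (Tf q P ρ) (Vf q P ρ) q = E0 ρ q P := by
  have h1ρ : 0 < 1 + ρ := by linarith
  have hs : (1 / (1 + ρ)) * (1 + ρ) = 1 := by field_simp
  have hSpos := Sf_pos (q := q) (P := P) hρ1 hq hP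
  have key : ∀ y x,
      Tf q P ρ y * Vf q P ρ y x * Real.log (Tf q P ρ y * Vf q P ρ y x / (q x * P x y)) +
        ρ * (Tf q P ρ y * Vf q P ρ y x *
          Real.log (Tf q P ρ y * Vf q P ρ y x / (Tf q P ρ y * q x)))
      = Tf q P ρ y * Vf q P ρ y x * (-Real.log (Sf q P ρ)) := by
    intro y x
    by_cases hW : Tf q P ρ y * Vf q P ρ y x = 0
    · rw [hW]; ring
    · have hTy : Tf q P ρ y ≠ 0 := fun h => hW (by rw [h]; ring)
      have hVx : Vf q P ρ y x ≠ 0 := fun h => hW (by rw [h]; ring)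
      have hA : Af q P ρ y ≠ 0 := Tf_ne_zero_imp hρ1 hq hP hTy
      have hApos : 0 < Af q P ρ y := (Af_nonneg hq hP y).lt_of_ne (Ne.symm hA)
      have hqP := fam_fin hρ1 hq hP y x hW
      have hqx : 0 < q x := (hq.1 x).lt_of_ne fun h => hqP (by rw [← h]; ring)
      have hPxy : 0 < P x y := ((hP x).1 y).lt_of_ne fun h => hqP (by rw [← h]; ring)
      have hVfeq : Vf q P ρ y x = q x * P x y ^ (1 / (1 + ρ)) / Af q P ρ y := by
        rw [Vf, if_neg hA]
      have lT : Real.log (Tf q P ρ y)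
          = (1 + ρ) * Real.log (Af q P ρ y) - Real.log (Sf q P ρ) := by
        rw [Tf, Real.log_div (by positivity) hSpos.ne', Real.log_rpow hApos]
      have lV : Real.log (Vf q P ρ y x)
          = Real.log (q x) + (1 / (1 + ρ)) * Real.log (P x y) - Real.log (Af q P ρ y) := by
        rw [hVfeq, Real.log_div (by positivity) hA, Real.log_mul hqx.ne' (by positivity),
          Real.log_rpow hPxy]
      rw [Real.log_div hW hqP, Real.log_mul hTy hVx, Real.log_mul hqx.ne' hPxy.ne',
        mul_div_mul_left _ _ hTy, Real.log_div hVx hqx.ne', lT, lV]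
      linear_combination (Tf q P ρ y * Vf q P ρ y x * Real.log (P x y)) * hs
  have hVsum : ∀ y, ∑ x, Vf q P ρ y x = 1 := fun y => ((Vf_cpmf hρ1 hq hP) y).2
  have hTsum : ∑ y, Tf q P ρ y = 1 := (Tf_pmf hρ1 hq hP).2
  unfold rDQP rDTQ
  rw [Finset.mul_sum, ← Finset.sum_add_distrib]
  have : ∀ y ∈ Finset.univ, ((∑ x, Tf q P ρ y * Vf q P ρ y x *
        Real.log (Tf q P ρ y * Vf q P ρ y x / (q x * P x y))) +
      ρ * ∑ x, Tf q P ρ y * Vf q P ρ y x *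
        Real.log (Tf q P ρ y * Vf q P ρ y x / (Tf q P ρ y * q x)))
      = Tf q P ρ y * (-Real.log (Sf q P ρ)) := by
    intro y _
    rw [Finset.mul_sum, ← Finset.sum_add_distrib, Finset.sum_congr rfl fun x _ => key y x]
    calc ∑ x, Tf q P ρ y * Vf q P ρ y x * (-Real.log (Sf q P ρ))
        = (Tf q P ρ y * (-Real.log (Sf q P ρ))) * ∑ x, Vf q P ρ y x := by
          rw [Finset.mul_sum]; exact Finset.sum_congr rfl fun x _ => by ring
      _ = Tf q P ρ y * (-Real.log (Sf q P ρ)) := by rw [hVsum y, mul_one]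
  rw [Finset.sum_congr rfl this, ← Finset.sum_mul, hTsum, one_mul, E0_eq_Sf]

lemma dtqF_nonneg [Nonempty 𝓧] (hρ1 : -1 < ρ) (hq : IsPMF q) (hP : IsChannel P) :
    0 ≤ dtqF q P ρ := by
  unfold dtqF rDTQ
  refine Finset.sum_nonneg fun y _ => ?_
  by_cases hTy : Tf q P ρ y = 0
  · refine Finset.sum_nonneg fun x _ => ?_
    rw [hTy]; simp
  · have hTyp : 0 < Tf q P ρ y := ((Tf_pmf hρ1 hq hP).1 y).lt_of_ne (Ne.symm hTy)
    have hstep : ∑ x, Tf q P ρ y * Vf q P ρ y x *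
        Real.log (Tf q P ρ y * Vf q P ρ y x / (Tf q P ρ y * q x))
        = Tf q P ρ y * ∑ x, Vf q P ρ y x * Real.log (Vf q P ρ y x / q x) := by
      rw [Finset.mul_sum]
      refine Finset.sum_congr rfl fun x _ => ?_
      rw [mul_div_mul_left _ _ hTy]
      ring
    rw [hstep]
    refine mul_nonneg hTyp.le ?_
    have hgb := gibbs (μ := q) ((Vf_cpmf hρ1 hq hP) y).1 ((Vf_cpmf hρ1 hq hP) y).2 hq.1 ?_
    · rw [hq.2, Real.log_one, neg_zero] at hgb
      exact hgb
    · intro x hx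
      have hA : Af q P ρ y ≠ 0 := Tf_ne_zero_imp hρ1 hq hP hTy
      have hqP := fam_fin hρ1 hq hP y x (mul_ne_zero hTy hx)
      exact (hq.1 x).lt_of_ne fun h => hqP (by rw [← h]; ring)

end AuxNTS5
section AuxNTS6
set_option linter.unusedSectionVars false
open Real Set
variable {𝓧 𝓨 : Type*} [Fintype 𝓧] [Fintype 𝓨] {q : 𝓧 → ℝ} {P : 𝓧 → 𝓨 → ℝ} {ρ : ℝ}

lemma E0_zero (hq : IsPMF q) (hP : IsChannel P) : E0 0 q P = 0 := by
  have h1 : ∑ y, (∑ x, q x * P x y ^ ((1:ℝ) / (1 + 0))) ^ ((1:ℝ) + 0) = 1 := by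
    have hterm : ∀ y, (∑ x, q x * P x y ^ ((1:ℝ) / (1 + 0))) ^ ((1:ℝ) + 0)
        = ∑ x, q x * P x y := by
      intro y
      norm_num [Real.rpow_one]
    rw [Finset.sum_congr rfl fun y _ => hterm y, Finset.sum_comm]
    calc ∑ x, ∑ y, q x * P x y = ∑ x, q x := Finset.sum_congr rfl fun x _ => by
          rw [← Finset.mul_sum, (hP x).2, mul_one]
      _ = 1 := hq.2
  unfold E0
  rw [h1, Real.log_one, neg_zero]

lemma one_le_sum_maxP (hq : IsPMF q) (hP : IsChannel P) : 1 ≤ ∑ y, maxP q P y := by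
  obtain ⟨x₀, hx₀⟩ := pmf_exists_pos hq
  calc (1:ℝ) = ∑ y, P x₀ y := ((hP x₀).2).symm
    _ ≤ ∑ y, maxP q P y := Finset.sum_le_sum fun y _ => (maxP_spec hq y).1 x₀ hx₀

lemma E0_le_E0m1_add (hρ1 : -1 < ρ) (hq : IsPMF q) (hP : IsChannel P)
    {c : ℝ} (hc : 0 < c) (hcq : ∀ x, q x ≠ 0 → c ≤ q x) :
    E0 ρ q P ≤ E0m1 q P + (1 + ρ) * (-Real.log c) := by
  have h1ρ : 0 < 1 + ρ := by linarith
  have hs : (1 / (1 + ρ)) * (1 + ρ) = 1 := by field_simp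
  have hm : ∀ y, c ^ (1 + ρ) * maxP q P y ≤ Af q P ρ y ^ (1 + ρ) := by
    intro y
    obtain ⟨x₀, hx₀, hEq⟩ := (maxP_spec hq y).2
    have hmnn : 0 ≤ maxP q P y := by rw [hEq]; exact (hP x₀).1 y
    have hA1 : c * maxP q P y ^ (1 / (1 + ρ)) ≤ Af q P ρ y := by
      calc c * maxP q P y ^ (1 / (1 + ρ)) ≤ q x₀ * P x₀ y ^ (1 / (1 + ρ)) := by
            rw [hEq]
            exact mul_le_mul_of_nonneg_right (hcq x₀ hx₀.ne')
              (Real.rpow_nonneg ((hP x₀).1 y) _)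
        _ ≤ Af q P ρ y := Finset.single_le_sum
            (fun x' _ => mul_nonneg (hq.1 x') (Real.rpow_nonneg ((hP x').1 y) _))
            (Finset.mem_univ x₀)
    calc c ^ (1 + ρ) * maxP q P y = (c * maxP q P y ^ (1 / (1 + ρ))) ^ (1 + ρ) := by
          rw [Real.mul_rpow hc.le (Real.rpow_nonneg hmnn _), ← Real.rpow_mul hmnn, hs,
            Real.rpow_one]
      _ ≤ Af q P ρ y ^ (1 + ρ) :=
          Real.rpow_le_rpow (by positivity) hA1 h1ρ.le
  have hS : c ^ (1 + ρ) * ∑ y, maxP q P y ≤ Sf q P ρ := by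
    rw [Finset.mul_sum]
    exact Finset.sum_le_sum fun y _ => hm y
  have hSm : 0 < ∑ y, maxP q P y := lt_of_lt_of_le one_pos (one_le_sum_maxP hq hP)
  have hpos : 0 < c ^ (1 + ρ) * ∑ y, maxP q P y := by positivity
  have hlog1 : Real.log (c ^ (1 + ρ) * ∑ y, maxP q P y) ≤ Real.log (Sf q P ρ) :=
    Real.log_le_log hpos hS
  have hlog2 : Real.log (c ^ (1 + ρ) * ∑ y, maxP q P y)
      = (1 + ρ) * Real.log c + Real.log (∑ y, maxP q P y) := by
    rw [Real.log_mul (by positivity) hSm.ne', Real.log_rpow hc]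
  rw [E0_eq_Sf]
  unfold E0m1
  linarith

/-- explicit continuous representation of `dtqF` terms -/
noncomputable def Gfun (q : 𝓧 → ℝ) (P : 𝓧 → 𝓨 → ℝ) (y : 𝓨) (x : 𝓧) (ρ : ℝ) : ℝ :=
  if q x * P x y = 0 then 0 else
    Real.exp (Real.log (Af q P ρ y) * ρ) / Sf q P ρ *
      (q x * Real.exp (Real.log (P x y) * (1 / (1 + ρ)))) *
      (1 / (1 + ρ) * Real.log (P x y) - Real.log (Af q P ρ y))

lemma dtqF_eq_Gfun [Nonempty 𝓧] (hρ1 : -1 < ρ) (hq : IsPMF q) (hP : IsChannel P) :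
    dtqF q P ρ = ∑ y, ∑ x, Gfun q P y x ρ := by
  have h1ρ : 0 < 1 + ρ := by linarith
  unfold dtqF rDTQ
  refine Finset.sum_congr rfl fun y _ => Finset.sum_congr rfl fun x _ => ?_
  by_cases hqP : q x * P x y = 0
  · rw [Gfun, if_pos hqP]
    have hW : Tf q P ρ y * Vf q P ρ y x = 0 := by
      by_cases hA : Af q P ρ y = 0
      · rw [Tf, hA, Real.zero_rpow h1ρ.ne', zero_div, zero_mul]
      · rw [Vf, if_neg hA]
        rcases mul_eq_zero.mp hqP with h' | h'
        · rw [h', zero_mul, zero_div, mul_zero]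
        · rw [h', Real.zero_rpow (by positivity), mul_zero, zero_div, mul_zero]
    rw [hW]; ring
  · rw [Gfun, if_neg hqP]
    have hqx : 0 < q x := (hq.1 x).lt_of_ne fun h => hqP (by rw [← h]; ring)
    have hPxy : 0 < P x y := ((hP x).1 y).lt_of_ne fun h => hqP (by rw [← h]; ring)
    have hApos : 0 < Af q P ρ y := Af_pos hρ1 hq hP hqP
    have hSpos := Sf_pos (q := q) (P := P) hρ1 hq hP
    have hVfeq : Vf q P ρ y x = q x * P x y ^ (1 / (1 + ρ)) / Af q P ρ y := by
      rw [Vf, if_neg hApos.ne']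
    have hTy : Tf q P ρ y ≠ 0 := by
      rw [Tf]
      positivity
    have hVx : 0 < Vf q P ρ y x := by
      rw [hVfeq]
      positivity
    have hlog : Real.log (Tf q P ρ y * Vf q P ρ y x / (Tf q P ρ y * q x))
        = 1 / (1 + ρ) * Real.log (P x y) - Real.log (Af q P ρ y) := by
      rw [mul_div_mul_left _ _ hTy, hVfeq, div_div,
        Real.log_div (by positivity) (by positivity),
        Real.log_mul hqx.ne' (by positivity), Real.log_mul hApos.ne' hqx.ne',
        Real.log_rpow hPxy]
      ring
    have hW : Tf q P ρ y * Vf q P ρ y x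
        = Real.exp (Real.log (Af q P ρ y) * ρ) / Sf q P ρ *
          (q x * Real.exp (Real.log (P x y) * (1 / (1 + ρ)))) := by
      rw [Tf, hVfeq, ← Real.rpow_def_of_pos hApos, ← Real.rpow_def_of_pos hPxy]
      rw [show (1:ℝ) + ρ = 1 + ρ from rfl, Real.rpow_add hApos, Real.rpow_one]
      field_simp
    rw [hlog, hW]

lemma Af_contOn {ρ₁ : ℝ} (h₁ : -1 < ρ₁) (hq : IsPMF q) (hP : IsChannel P) (y : 𝓨) :
    ContinuousOn (fun ρ => Af q P ρ y) (Icc ρ₁ 0) := by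
  have hne : ∀ ρ ∈ Icc ρ₁ 0, (1:ℝ) + ρ ≠ 0 := fun ρ hρ => by
    have := hρ.1; intro h; linarith
  unfold Af
  refine continuousOn_finset_sum _ fun x _ => ?_
  by_cases hxy : P x y = 0
  · refine (continuousOn_const (c := (0:ℝ))).congr fun ρ hρ => ?_
    rw [hxy, Real.zero_rpow (one_div_ne_zero (hne ρ hρ)), mul_zero]
  · have hppos : 0 < P x y := ((hP x).1 y).lt_of_ne (Ne.symm hxy)
    refine ContinuousOn.congr (f := fun ρ : ℝ => q x * Real.exp (Real.log (P x y) * (1 / (1 + ρ))))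
      ?_ fun ρ hρ => by rw [Real.rpow_def_of_pos hppos]
    exact continuousOn_const.mul ((continuousOn_const.mul (continuousOn_const.div
      (continuousOn_const.add continuousOn_id) hne)).rexp)

lemma Af_pos_on {ρ₁ : ℝ} (hq : IsPMF q) (hP : IsChannel P) {y : 𝓨} {x : 𝓧}
    (h : q x * P x y ≠ 0) : ∀ ρ ∈ Icc ρ₁ 0, -1 < ρ₁ → 0 < Af q P ρ y :=
  fun ρ hρ h₁ => Af_pos (by linarith [hρ.1]) hq hP h

lemma Sf_contOn {ρ₁ : ℝ} (h₁ : -1 < ρ₁) (hq : IsPMF q) (hP : IsChannel P) :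
    ContinuousOn (fun ρ => Sf q P ρ) (Icc ρ₁ 0) := by
  have hne : ∀ ρ ∈ Icc ρ₁ 0, (1:ℝ) + ρ ≠ 0 := fun ρ hρ => by
    have := hρ.1; intro h; linarith
  unfold Sf
  refine continuousOn_finset_sum _ fun y _ => ?_
  by_cases hy : ∀ x, q x * P x y = 0
  · refine (continuousOn_const (c := (0:ℝ))).congr fun ρ hρ => ?_
    have hA : Af q P ρ y = 0 := (Af_eq_zero_iff (by linarith [hρ.1]) hq hP y).mpr hy
    show Af q P ρ y ^ (1 + ρ) = (0:ℝ)
    rw [hA, Real.zero_rpow (hne ρ hρ)]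
  · push_neg at hy
    obtain ⟨x, hx⟩ := hy
    have hApos : ∀ ρ ∈ Icc ρ₁ 0, 0 < Af q P ρ y :=
      fun ρ hρ => Af_pos (by linarith [hρ.1]) hq hP hx
    refine ContinuousOn.congr
      (f := fun ρ : ℝ => Real.exp (Real.log (Af q P ρ y) * (1 + ρ))) ?_
      (fun ρ hρ => by rw [Real.rpow_def_of_pos (hApos ρ hρ)])
    exact ((((Af_contOn h₁ hq hP y).log fun ρ hρ => (hApos ρ hρ).ne').mul
      (continuousOn_const.add continuousOn_id)).rexp)

lemma dtqF_contOn [Nonempty 𝓧] {ρ₁ : ℝ} (h₁ : -1 < ρ₁) (hq : IsPMF q) (hP : IsChannel P) :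
    ContinuousOn (dtqF q P) (Icc ρ₁ 0) := by
  have hne : ∀ ρ ∈ Icc ρ₁ 0, (1:ℝ) + ρ ≠ 0 := fun ρ hρ => by
    have := hρ.1; intro h; linarith
  refine ContinuousOn.congr (f := fun ρ => ∑ y, ∑ x, Gfun q P y x ρ) ?_
    (fun ρ hρ => dtqF_eq_Gfun (by linarith [hρ.1]) hq hP)
  refine continuousOn_finset_sum _ fun y _ => continuousOn_finset_sum _ fun x _ => ?_
  unfold Gfun
  by_cases hqP : q x * P x y = 0
  · simp only [if_pos hqP]
    exact continuousOn_const
  · simp only [if_neg hqP]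
    have hApos : ∀ ρ ∈ Icc ρ₁ 0, 0 < Af q P ρ y :=
      fun ρ hρ => Af_pos (by linarith [hρ.1]) hq hP hqP
    have hSpos : ∀ ρ ∈ Icc ρ₁ 0, 0 < Sf q P ρ :=
      fun ρ hρ => Sf_pos (by linarith [hρ.1]) hq hP
    have hlogA : ContinuousOn (fun ρ => Real.log (Af q P ρ y)) (Icc ρ₁ 0) :=
      (Af_contOn h₁ hq hP y).log fun ρ hρ => (hApos ρ hρ).ne'
    have hsρ : ContinuousOn (fun ρ : ℝ => 1 / (1 + ρ)) (Icc ρ₁ 0) :=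
      continuousOn_const.div (continuousOn_const.add continuousOn_id) hne
    exact ((((hlogA.mul continuousOn_id).rexp.div (Sf_contOn h₁ hq hP)
        fun ρ hρ => (hSpos ρ hρ).ne').mul
      (continuousOn_const.mul ((continuousOn_const.mul hsρ).rexp))).mul
      ((hsρ.mul continuousOn_const).sub hlogA))

end AuxNTS6
section AuxNTS7
set_option linter.unusedSectionVars false
open Real Set
variable {𝓧 𝓨 : Type*} [Fintype 𝓧] [Fintype 𝓨] {q : 𝓧 → ℝ} {P : 𝓧 → 𝓨 → ℝ}

lemma coe_obj (a b R : ℝ) :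
    ((a : ℝ) : EReal) + max ((R : EReal) - (b : EReal)) 0
      = ((a + max (R - b) 0 : ℝ) : EReal) := by
  rw [show ((R : EReal) - (b : EReal)) = (((R - b : ℝ)) : EReal) from (EReal.coe_sub _ _).symm,
    show (0 : EReal) = (((0:ℝ)) : EReal) from rfl, ← erealCoeMax, ← EReal.coe_add]

lemma EcML_le_candidate (R : ℝ) {T : 𝓨 → ℝ} {V : 𝓨 → 𝓧 → ℝ}
    (hT : IsPMF T) (hV : IsCondPMF V) :
    EcML R q P ≤ DQP T V q P + max ((R : EReal) - DTQ T V q) 0 :=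
  sInf_le ⟨T, V, hT, hV, rfl⟩

lemma le_EcML (R : ℝ) {c : EReal}
    (h : ∀ T : 𝓨 → ℝ, ∀ V : 𝓨 → 𝓧 → ℝ, IsPMF T → IsCondPMF V →
      c ≤ DQP T V q P + max ((R : EReal) - DTQ T V q) 0) :
    c ≤ EcML R q P := by
  refine le_sInf ?_
  rintro v ⟨T, V, hT, hV, rfl⟩
  exact h T V hT hV

lemma gallager_lb_full {T : 𝓨 → ℝ} {V : 𝓨 → 𝓧 → ℝ} {ρ : ℝ}
    (hρ : ρ ∈ Set.Icc (-1:ℝ) 0) (hq : IsPMF q) (hP : IsChannel P)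
    (hT : IsPMF T) (hV : IsCondPMF V)
    (hfin : ∀ y x, T y * V y x ≠ 0 → q x * P x y ≠ 0) :
    E0full ρ q P ≤ rDQP T V q P + ρ * rDTQ T V q := by
  by_cases hm1 : ρ = -1
  · subst hm1
    rw [E0full, if_pos rfl]
    have := gallager_lb_m1 hq hP hT hV hfin
    linarith
  · rw [E0full, if_neg hm1]
    exact gallager_lb (lt_of_le_of_ne hρ.1 (Ne.symm hm1)) hq hP hT hV hfin

lemma weak_duality (hq : IsPMF q) (hP : IsChannel P) (R : ℝ) {ρ : ℝ}
    (hρ : ρ ∈ Set.Icc (-1:ℝ) 0) :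
    ((E0full ρ q P - ρ * R : ℝ) : EReal) ≤ EcML R q P := by
  refine le_EcML R ?_
  intro T V hT hV
  by_cases hfin : ∀ y x, T y * V y x ≠ 0 → q x * P x y ≠ 0
  · have hfin' : ∀ y x, T y * V y x ≠ 0 → T y * q x ≠ 0 := by
      intro y x hW
      have hTy : T y ≠ 0 := fun h => hW (by rw [h]; ring)
      have hqx : q x ≠ 0 := fun h => (hfin y x hW) (by rw [h]; ring)
      exact mul_ne_zero hTy hqx
    rw [DQP_eq_coe hfin, DTQ_eq_coe hfin', coe_obj, EReal.coe_le_coe_iff]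
    have hub : -ρ * (R - rDTQ T V q) ≤ max (R - rDTQ T V q) 0 := by
      rcases le_total (R - rDTQ T V q) 0 with h | h
      · rw [max_eq_right h]
        exact mul_nonpos_of_nonneg_of_nonpos (by linarith [hρ.2]) h
      · rw [max_eq_left h]
        calc -ρ * (R - rDTQ T V q) ≤ 1 * (R - rDTQ T V q) :=
              mul_le_mul_of_nonneg_right (by linarith [hρ.1]) h
          _ = R - rDTQ T V q := one_mul _
    have hgal := gallager_lb_full hρ hq hP hT hV hfin
    linarith
  · push_neg at hfin
    obtain ⟨y, x, hW, hqP⟩ := hfin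
    rw [DQP_eq_top y x hW hqP]
    have hmax : max ((R : EReal) - DTQ T V q) 0 ≠ ⊥ :=
      ((lt_of_lt_of_le (by simp : (⊥:EReal) < 0) (le_max_right _ _))).ne'
    rw [EReal.top_add_of_ne_bot hmax]
    exact le_top

lemma fam_fin' [Nonempty 𝓧] {ρ : ℝ} (hρ1 : -1 < ρ) (hq : IsPMF q) (hP : IsChannel P) :
    ∀ y x, Tf q P ρ y * Vf q P ρ y x ≠ 0 → Tf q P ρ y * q x ≠ 0 := by
  intro y x hW
  have hTy : Tf q P ρ y ≠ 0 := fun h => hW (by rw [h]; ring)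
  have hqx : q x ≠ 0 := fun h => (fam_fin hρ1 hq hP y x hW) (by rw [h]; ring)
  exact mul_ne_zero hTy hqx

lemma EcML_le_fam [Nonempty 𝓧] (hq : IsPMF q) (hP : IsChannel P) (R : ℝ) {ρ : ℝ}
    (hρ1 : -1 < ρ) (hρ0 : ρ ≤ 0) :
    EcML R q P ≤ (((E0 ρ q P - ρ * dtqF q P ρ) + max (R - dtqF q P ρ) 0 : ℝ) : EReal) := by
  have hcand := EcML_le_candidate (q := q) (P := P) R
    (Tf_pmf hρ1 hq hP) (Vf_cpmf hρ1 hq hP)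
  rw [DQP_eq_coe (fam_fin hρ1 hq hP), DTQ_eq_coe (fam_fin' hρ1 hq hP), coe_obj] at hcand
  have hid : rDQP (Tf q P ρ) (Vf q P ρ) q P = E0 ρ q P - ρ * dtqF q P ρ := by
    have := fam_identity hρ1 hq hP
    unfold dtqF
    linarith
  rw [hid] at hcand
  exact hcand

/-- main parametric representation of `EcML` -/
lemma EcML_param [Nonempty 𝓧] (hq : IsPMF q) (hP : IsChannel P) (R : ℝ) :
    ∃ ρ ∈ Set.Icc (-1:ℝ) 0, EcML R q P = ((E0full ρ q P - ρ * R : ℝ) : EReal) := by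
  have hE00 : E0full 0 q P = 0 := by
    rw [E0full, if_neg (by norm_num : (0:ℝ) ≠ -1)]
    exact E0_zero hq hP
  have h0 : ((0:ℝ) : EReal) ≤ EcML R q P := by
    have := weak_duality hq hP R (ρ := 0) ⟨by norm_num, le_refl 0⟩
    rw [hE00] at this
    simpa using this
  have hub0 := EcML_le_fam hq hP R (ρ := 0) (by norm_num) (le_refl 0)
  have hne_top : EcML R q P ≠ ⊤ := ne_top_of_le_ne_top (EReal.coe_ne_top _) hub0
  have hne_bot : EcML R q P ≠ ⊥ := by
    intro h
    rw [h] at h0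
    exact absurd h0 (by simp)
  set m : ℝ := (EcML R q P).toReal with hmdef
  have hm : EcML R q P = (m : EReal) := (EReal.coe_toReal hne_top hne_bot).symm
  have hwd : ∀ ρ ∈ Set.Icc (-1:ℝ) 0, E0full ρ q P - ρ * R ≤ m := by
    intro ρ hρ
    have := weak_duality hq hP R hρ
    rw [hm] at this
    exact EReal.coe_le_coe_iff.mp this
  have hub : ∀ ρ, -1 < ρ → ρ ≤ 0 →
      m ≤ (E0 ρ q P - ρ * dtqF q P ρ) + max (R - dtqF q P ρ) 0 := by
    intro ρ h1 h2
    have := EcML_le_fam hq hP R h1 h2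
    rw [hm] at this
    exact EReal.coe_le_coe_iff.mp this
  by_cases hA : R ≤ dtqF q P 0
  · refine ⟨0, ⟨by norm_num, le_refl 0⟩, ?_⟩
    have h1 : m ≤ 0 := by
      have := hub 0 (by norm_num) (le_refl 0)
      rw [E0_zero hq hP, max_eq_right (by linarith)] at this
      linarith
    have h2 : 0 ≤ m := by
      have := hwd 0 ⟨by norm_num, le_refl 0⟩
      rw [hE00] at this
      linarith
    rw [hm, hE00]
    exact congrArg Real.toEReal (by linarith)
  · push_neg at hA
    by_cases hroot : ∃ ρ', (-1 < ρ' ∧ ρ' ≤ 0) ∧ dtqF q P ρ' = R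
    · obtain ⟨ρ', ⟨hρ'1, hρ'0⟩, hr⟩ := hroot
      refine ⟨ρ', ⟨hρ'1.le, hρ'0⟩, ?_⟩
      have hle : m ≤ E0 ρ' q P - ρ' * R := by
        have := hub ρ' hρ'1 hρ'0
        rw [hr] at this
        simpa using this
      have hge := hwd ρ' ⟨hρ'1.le, hρ'0⟩
      rw [E0full, if_neg hρ'1.ne'] at hge
      rw [hm, E0full, if_neg hρ'1.ne']
      exact congrArg Real.toEReal (by linarith)
    · have hlt : ∀ ρ, -1 < ρ → ρ ≤ 0 → dtqF q P ρ < R := by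
        intro ρ h1 h2
        rcases lt_or_ge (dtqF q P ρ) R with h | h
        · exact h
        · exfalso
          have hne0 : dtqF q P ρ ≠ R := fun h' => hroot ⟨ρ, ⟨h1, h2⟩, h'⟩
          have hgt : R < dtqF q P ρ := lt_of_le_of_ne h (Ne.symm hne0)
          have hρ0' : ρ < 0 := by
            rcases h2.lt_or_eq with h' | h'
            · exact h'
            · subst h'
              linarith
          have hcont := dtqF_contOn (q := q) (P := P) h1 hq hP
          have hmem : R ∈ Icc (dtqF q P 0) (dtqF q P ρ) := ⟨hA.le, hgt.le⟩
          obtain ⟨ρ', hρ'mem, hρ'⟩ := intermediate_value_Icc' hρ0'.le hcont hmem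
          exact hroot ⟨ρ', ⟨lt_of_lt_of_le h1 hρ'mem.1, hρ'mem.2⟩, hρ'⟩
      have hkey : ∀ ρ, -1 < ρ → ρ ≤ 0 → m ≤ E0 ρ q P + R := by
        intro ρ h1 h2
        have hu := hub ρ h1 h2
        have hd := dtqF_nonneg h1 hq hP
        have hlt' := hlt ρ h1 h2
        rw [max_eq_left (by linarith)] at hu
        nlinarith [mul_nonneg (by linarith : (0:ℝ) ≤ 1 + ρ) hd]
      obtain ⟨c, hc, hc1, hcq⟩ : ∃ c, 0 < c ∧ c ≤ 1 ∧ ∀ x, q x ≠ 0 → c ≤ q x := by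
        obtain ⟨x₀, hx₀⟩ := pmf_exists_pos hq
        have hsne : (Finset.univ.filter (fun x => q x ≠ 0)).Nonempty :=
          ⟨x₀, Finset.mem_filter.mpr ⟨Finset.mem_univ _, hx₀.ne'⟩⟩
        obtain ⟨a, ha, hmin⟩ := Finset.exists_min_image _ q hsne
        have haq : q a ≠ 0 := (Finset.mem_filter.mp ha).2
        refine ⟨q a, (hq.1 a).lt_of_ne (Ne.symm haq), pmf_le_one hq a, fun x hx => ?_⟩
        exact hmin x (Finset.mem_filter.mpr ⟨Finset.mem_univ _, hx⟩)
      have hC : 0 ≤ -Real.log c := by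
        have := Real.log_nonpos hc.le hc1
        linarith
      have hfinal : m ≤ E0m1 q P + R := by
        by_contra hcon
        push_neg at hcon
        set ε := m - (E0m1 q P + R) with hεdef
        have hε : 0 < ε := by simp only [hεdef]; linarith
        set δ := min 1 (ε / (2 * (-Real.log c + 1))) with hδdef
        have hδpos : 0 < δ := lt_min one_pos (by positivity)
        have hδ1 : δ ≤ 1 := min_le_left _ _
        set ρ := -1 + δ with hρdef
        have h1 : -1 < ρ := by simp only [hρdef]; linarith
        have h2 : ρ ≤ 0 := by simp only [hρdef]; linarith
        have h3 := hkey ρ h1 h2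
        have h4 := E0_le_E0m1_add h1 hq hP hc hcq
        have h5 : (1 + ρ) * (-Real.log c) = δ * (-Real.log c) := by
          simp only [hρdef]; ring
        have h6 : δ * (-Real.log c) ≤ ε / 2 := by
          calc δ * (-Real.log c) ≤ (ε / (2 * (-Real.log c + 1))) * (-Real.log c) :=
                mul_le_mul_of_nonneg_right (min_le_right _ _) hC
            _ ≤ ε / 2 := by
                rw [div_mul_eq_mul_div, div_le_div_iff₀ (by positivity) (by norm_num)]
                nlinarith
        have : m ≤ E0m1 q P + R + ε / 2 := by linarith
        simp only [hεdef] at this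
        linarith
      refine ⟨-1, ⟨le_refl _, by norm_num⟩, ?_⟩
      have hge := hwd (-1) ⟨le_refl _, by norm_num⟩
      rw [E0full, if_pos rfl] at hge
      rw [hm, E0full, if_pos rfl]
      exact congrArg Real.toEReal (by linarith)

end AuxNTS7
theorem stmt_11 {𝓧 𝓨 : Type*} [Fintype 𝓧] [Fintype 𝓨] [Nonempty 𝓧] [Nonempty 𝓨]
    (P : 𝓧 → 𝓨 → ℝ) (hP : IsChannel P) (Q : 𝓧 → ℝ) (hQ : IsPMF Q) (R : ℝ)
    (T : 𝓨 → ℝ) (V : 𝓨 → 𝓧 → ℝ) (hT : IsPMF T) (hV : IsCondPMF V)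
    (hmin : DQP T V Q P + max ((R : EReal) - DTQ T V Q) 0 = EcML R Q P)
    (Q' : 𝓧 → ℝ) (hQ' : ∀ x, Q' x = ∑ y, T y * V y x) :
    EcML R Q' P ≤ EcML R Q P
    ∧ ∃ ρ ∈ Set.Icc (-1 : ℝ) 0,
        EcML R Q' P = ((E0full ρ Q' P - ρ * R : ℝ) : EReal)
        ∧ EcML R Q' P + ((1 + ρ : ℝ) : EReal) * (∑ x, klTerm (Q' x) (Q x))
            ≤ EcML R Q P := by
  classical
  have hQ'p : IsPMF Q' := by
    constructor
    · intro x
      rw [hQ' x]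
      exact Finset.sum_nonneg fun y _ => mul_nonneg (hT.1 y) ((hV y).1 x)
    · calc ∑ x, Q' x = ∑ x, ∑ y, T y * V y x := Finset.sum_congr rfl fun x _ => hQ' x
        _ = ∑ y, ∑ x, T y * V y x := Finset.sum_comm
        _ = ∑ y, T y := Finset.sum_congr rfl fun y _ => by
              rw [← Finset.mul_sum, (hV y).2, mul_one]
        _ = 1 := hT.2
  obtain ⟨ρh, hρh, heq⟩ := EcML_param hQ'p hP R
  have hii : EcML R Q' P + ((1 + ρh : ℝ) : EReal) * (∑ x, klTerm (Q' x) (Q x))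
      ≤ EcML R Q P := by
    by_cases htop : EcML R Q P = ⊤
    · rw [htop]; exact le_top
    · have hmaxne : max ((R : EReal) - DTQ T V Q) 0 ≠ ⊥ :=
        (lt_of_lt_of_le (by simp : (⊥:EReal) < 0) (le_max_right _ _)).ne'
      have hfinQ : ∀ y x, T y * V y x ≠ 0 → Q x * P x y ≠ 0 := by
        intro y x hW
        by_contra hqP
        apply htop
        rw [← hmin, DQP_eq_top y x hW hqP, EReal.top_add_of_ne_bot hmaxne]
      have hfinQ' : ∀ y x, T y * V y x ≠ 0 → T y * Q x ≠ 0 := by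
        intro y x hW
        have hTy : T y ≠ 0 := fun h => hW (by rw [h]; ring)
        have hqx : Q x ≠ 0 := fun h => (hfinQ y x hW) (by rw [h]; ring)
        exact mul_ne_zero hTy hqx
      have hQrepr : EcML R Q P
          = ((rDQP T V Q P + max (R - rDTQ T V Q) 0 : ℝ) : EReal) := by
        rw [← hmin, DQP_eq_coe hfinQ, DTQ_eq_coe hfinQ', coe_obj]
      have hsupp : ∀ y x, T y * V y x ≠ 0 → Q' x * P x y ≠ 0 := by
        intro y x hW
        have hQ'x : 0 < Q' x := by rw [hQ' x]; exact marg_pos hT hV hW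
        have hP' : P x y ≠ 0 := fun h => hfinQ y x hW (by rw [h]; ring)
        exact mul_ne_zero hQ'x.ne' hP'
      have hgal := gallager_lb_full hρh hQ'p hP hT hV hsupp
      have hdec1 := rDQP_decomp hT hV hQ hP hfinQ hQ'
      have hdec2 := rDTQ_decomp hT hV hQ hP hfinQ hQ'
      have hklq : ∀ x, Q' x ≠ 0 → Q x ≠ 0 := by
        intro x hx
        obtain ⟨y, hy⟩ : ∃ y, T y * V y x ≠ 0 := by
          by_contra hc
          push_neg at hc
          apply hx
          rw [hQ' x]
          exact Finset.sum_eq_zero fun y _ => hc y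
        exact fun h => hfinQ y x hy (by rw [h]; ring)
      have hkl : (∑ x, klTerm (Q' x) (Q x))
          = ((∑ x, Q' x * Real.log (Q' x / Q x) : ℝ) : EReal) := by
        rw [erealCoeSum]
        exact Finset.sum_congr rfl fun x _ => klTerm_eq_coe (hklq x)
      rw [heq, hQrepr, hkl, ← EReal.coe_mul, ← EReal.coe_add, EReal.coe_le_coe_iff,
        hdec1, hdec2]
      set d := ∑ x, Q' x * Real.log (Q' x / Q x) with hd
      set a := rDQP T V Q' P with ha
      set b := rDTQ T V Q' with hb
      have hmax2 : -ρh * (R - (b + d)) ≤ max (R - (b + d)) 0 := by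
        rcases le_total (R - (b + d)) 0 with h | h
        · rw [max_eq_right h]
          exact mul_nonpos_of_nonneg_of_nonpos (by linarith [hρh.2]) h
        · rw [max_eq_left h]
          calc -ρh * (R - (b + d)) ≤ 1 * (R - (b + d)) :=
                mul_le_mul_of_nonneg_right (by linarith [hρh.1]) h
            _ = R - (b + d) := one_mul _
      linarith [hgal, hmax2]
  have hnn : (0:EReal) ≤ ((1 + ρh : ℝ) : EReal) * (∑ x, klTerm (Q' x) (Q x)) := by
    refine mul_nonneg ?_ (sum_klTerm_nonneg hQ'p hQ)
    exact_mod_cast (by linarith [hρh.1] : (0:ℝ) ≤ 1 + ρh)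
  refine ⟨?_, ρh, hρh, heq, hii⟩
  calc EcML R Q' P = EcML R Q' P + 0 := (add_zero _).symm
    _ ≤ EcML R Q' P + ((1 + ρh : ℝ) : EReal) * (∑ x, klTerm (Q' x) (Q x)) :=
        add_le_add le_rfl hnn
    _ ≤ EcML R Q P := hii
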